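/- Let ℓ be a prime, F a finite field of characteristic ℓ, V an F-vector space of dimension r, G a finite group with a faithful F-linear representation ρ : G → GL(V), and χ_0 : G → F^× a group homomorphism. Then the kernel of χ_0 is an ℓ-group if and only if there exist a chain of G-stable subspaces 0 = V_0 ⊆ V_1 ⊆ ⋯ ⊆ V_r = V with dim_F V_s = s, and integers i_s ≥ 0 (1 ≤ s ≤ r), such that ρ(g)v − χ_0(g)^{i_s}·v ∈ V_{s−1} for all g ∈ G and v ∈ V_s. -/

import Mathlib

open Module Finset

section Eig
variable {ℓ : ℕ}
variable {F : Type} [Field F] [Fintype F] [CharP F ℓ]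
variable {G : Type} [Group G] [Finite G]
variable {Q : Type} [AddCommGroup Q] [Module F Q] [FiniteDimensional F Q]

lemma eig_pow {T : Q →ₗ[F] Q} {c : F} {v : Q} (h : T v = c • v) (m : ℕ) :
    (T ^ m) v = c ^ m • v := by
  induction m with
  | zero => simp
  | succ n ih =>
    rw [pow_succ, Module.End.mul_apply, h, map_smul, ih, smul_smul, ← pow_succ']

lemma exists_common_eigenvector (hℓ : ℓ.Prime) [Nontrivial Q]
    (σ : G →* (Q →ₗ[F] Q)) (χ₀ : G →* Fˣ) (hK : IsPGroup ℓ χ₀.ker) :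
    ∃ v : Q, v ≠ 0 ∧ ∃ i : ℕ, ∀ g : G, σ g v = ((χ₀ g : F) ^ i) • v := by
  classical
  haveI : Fact ℓ.Prime := ⟨hℓ⟩
  haveI : Finite Q := Module.finite_of_finite F
  -- the action of the kernel on Q
  letI : MulAction χ₀.ker Q := MulAction.compHom Q (σ.comp χ₀.ker.subtype)
  have hsmul : ∀ (k : χ₀.ker) (w : Q), k • w = σ (k : G) w := fun _ _ => rfl
  -- a nonzero fixed vector of the kernel
  obtain ⟨w, hwfix, hw0⟩ : ∃ w : Q, (∀ k : G, k ∈ χ₀.ker → σ k w = w) ∧ w ≠ 0 := by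
    have hcongr := hK.card_modEq_card_fixedPoints (α := Q)
    have hcardQ : Nat.card Q = Fintype.card F ^ finrank F Q := by
      classical
      haveI : Fintype Q := Fintype.ofFinite Q
      rw [Nat.card_eq_fintype_card, Module.card_fintype (Module.finBasis F Q)]
      simp
    obtain ⟨n, -, hcF⟩ := FiniteField.card F ℓ
    have hdvdQ : ℓ ∣ Nat.card Q := by
      rw [hcardQ, hcF]
      exact dvd_pow (dvd_pow_self ℓ n.ne_zero) finrank_pos.ne'
    have hfix0 : (0 : Q) ∈ MulAction.fixedPoints χ₀.ker Q := by
      intro k; rw [hsmul]; exact map_zero _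
    have hdvd_fix : ℓ ∣ Nat.card (MulAction.fixedPoints χ₀.ker Q) := by
      exact (Nat.modEq_zero_iff_dvd).1 (hcongr.symm.trans ((Nat.modEq_zero_iff_dvd).2 hdvdQ))
    have h1lt : 1 < Nat.card (MulAction.fixedPoints χ₀.ker Q) := by
      have hpos : 0 < Nat.card (MulAction.fixedPoints χ₀.ker Q) :=
        Nat.card_pos_iff.2 ⟨⟨⟨0, hfix0⟩⟩, Set.toFinite _⟩
      rcases hdvd_fix with ⟨c, hc⟩
      have : c ≠ 0 := by rintro rfl; omega
      calc 1 < ℓ := hℓ.one_lt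
        _ ≤ ℓ * c := Nat.le_mul_of_pos_right ℓ (Nat.pos_of_ne_zero this)
        _ = _ := hc.symm
    haveI : Nontrivial (MulAction.fixedPoints χ₀.ker Q) := by
      rwa [← Finite.one_lt_card_iff_nontrivial]
    obtain ⟨⟨a, ha⟩, ⟨b, hb⟩, hab⟩ := exists_pair_ne (MulAction.fixedPoints χ₀.ker Q)
    rcases eq_or_ne a 0 with rfl | ha0
    · exact ⟨b, fun k hk => hb ⟨k, hk⟩, fun h => hab (by simp [Subtype.ext_iff, h])⟩
    · exact ⟨a, fun k hk => ha ⟨k, hk⟩, ha0⟩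
  -- generator of the image of χ₀
  obtain ⟨c, hc⟩ := IsCyclic.exists_generator (α := χ₀.range)
  obtain ⟨g₀, hg₀⟩ : ∃ g₀ : G, χ₀ g₀ = (c : Fˣ) := ⟨(c : χ₀.range).2.choose, (c : χ₀.range).2.choose_spec⟩
  have hgen : ∀ g : G, ∃ m : ℕ, (χ₀ g₀) ^ m = χ₀ g := by
    intro g
    have : (⟨χ₀ g, ⟨g, rfl⟩⟩ : χ₀.range) ∈ Subgroup.zpowers c := hc _
    rw [← mem_powers_iff_mem_zpowers] at this
    obtain ⟨m, hm⟩ := this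
    exact ⟨m, by rw [hg₀, ← Subgroup.coe_pow]; exact congrArg Subtype.val hm⟩
  set d := orderOf (χ₀ g₀) with hd
  have hd0 : 0 < d := orderOf_pos _
  have hζd : (χ₀ g₀) ^ d = 1 := pow_orderOf_eq_one _
  have hker_pow : g₀ ^ d ∈ χ₀.ker := by
    rw [MonoidHom.mem_ker, map_pow, hζd]
  -- ℓ does not divide d
  have hcastd : (d : F) ≠ 0 := by
    intro h0
    have hdvd : ℓ ∣ d := (CharP.cast_eq_zero_iff F ℓ d).1 h0
    have hdF : d ∣ Fintype.card Fˣ := orderOf_dvd_card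
    obtain ⟨n, -, hcF⟩ := FiniteField.card F ℓ
    rw [Fintype.card_units, hcF] at hdF
    have hl1 : ℓ ∣ ℓ ^ (n : ℕ) - 1 := hdvd.trans hdF
    have hl2 : ℓ ∣ ℓ ^ (n : ℕ) := dvd_pow_self ℓ n.ne_zero
    have hcard1 : 1 ≤ ℓ ^ (n:ℕ) := Nat.one_le_pow _ _ hℓ.pos
    have : ℓ ∣ 1 := by
      have := Nat.dvd_sub hl2 hl1
      rwa [Nat.sub_sub_self hcard1] at this
    exact Nat.Prime.one_lt hℓ |>.ne' (Nat.dvd_one.mp this)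
  -- setup
  set T : Q →ₗ[F] Q := σ g₀ with hT
  set ζF : F := ((χ₀ g₀ : Fˣ) : F) with hζF
  set cF : F := (((χ₀ g₀)⁻¹ : Fˣ) : F) with hcF'
  have hζc : ζF * cF = 1 := by
    rw [hζF, hcF', ← Units.val_mul, mul_inv_cancel, Units.val_one]
  have hcFd : cF ^ d = 1 := by
    rw [hcF', ← Units.val_pow_eq_pow_val, inv_pow, hζd, inv_one, Units.val_one]
  have hcFj : ∀ j, 0 < j → j < d → cF ^ j ≠ 1 := by
    intro j hj0 hjd h1
    have h2 : ((χ₀ g₀)⁻¹ : Fˣ) ^ j = 1 := Units.ext (by rwa [Units.val_pow_eq_pow_val, Units.val_one])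
    have h3 : (χ₀ g₀) ^ j = 1 := by
      rw [inv_pow] at h2
      rw [← inv_inv ((χ₀ g₀) ^ j), h2, inv_one]
    exact pow_ne_one_of_lt_orderOf hj0.ne' hjd h3
  have hTd : (T ^ d) w = w := by
    rw [hT, ← map_pow]
    exact hwfix _ hker_pow
  have Tfix : ∀ j, ∀ k ∈ χ₀.ker, σ k ((T ^ j) w) = (T ^ j) w := by
    intro j k hk
    rw [hT, ← map_pow, ← Module.End.mul_apply, ← map_mul]
    have hconj : (g₀ ^ j)⁻¹ * k * g₀ ^ j ∈ χ₀.ker := by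
      have := (MonoidHom.normal_ker χ₀).conj_mem k hk (g₀ ^ j)⁻¹
      rwa [inv_inv] at this
    have hdec : k * g₀ ^ j = g₀ ^ j * ((g₀ ^ j)⁻¹ * k * g₀ ^ j) := by group
    rw [hdec, map_mul, Module.End.mul_apply, hwfix _ hconj]
  -- the candidate eigenvectors
  set vv : ℕ → Q := fun i => ∑ j ∈ range d, cF ^ (i * j) • (T ^ j) w with hvv
  have hsumv : ∑ i ∈ range d, vv i = (d : F) • w := by
    have e1 : ∑ i ∈ range d, vv i
        = ∑ j ∈ range d, (∑ i ∈ range d, (cF ^ j) ^ i) • (T ^ j) w := by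
      simp only [hvv]
      rw [Finset.sum_comm]
      refine Finset.sum_congr rfl fun j _ => ?_
      rw [Finset.sum_smul]
      refine Finset.sum_congr rfl fun i _ => ?_
      rw [← pow_mul, mul_comm j i]
    rw [e1, Finset.sum_eq_single 0]
    · simp
    · intro j hj hj0
      rw [geom_sum_eq (hcFj j (Nat.pos_of_ne_zero hj0) (Finset.mem_range.mp hj)),
        ← pow_mul, mul_comm j d, pow_mul, hcFd, one_pow, sub_self, zero_div, zero_smul]
    · intro h0
      exact absurd (Finset.mem_range.mpr hd0) h0
  have hex : ∃ i, vv i ≠ 0 := by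
    by_contra h
    push_neg at h
    have h0 : (d : F) • w = 0 := by
      rw [← hsumv]
      exact Finset.sum_eq_zero fun i _ => h i
    rcases smul_eq_zero.mp h0 with h | h
    · exact hcastd h
    · exact hw0 h
  obtain ⟨i, hvne⟩ := hex
  have vfix : ∀ k ∈ χ₀.ker, σ k (vv i) = vv i := by
    intro k hk
    rw [hvv]
    simp only [map_sum, map_smul]
    exact Finset.sum_congr rfl fun j _ => by rw [Tfix j k hk]
  have key : T (vv i) = (ζF ^ i) • vv i := by
    have e1 : T (vv i) = ∑ j ∈ range d, cF ^ (i * j) • (T ^ (j + 1)) w := by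
      simp only [hvv, map_sum, map_smul]
      refine Finset.sum_congr rfl fun j _ => ?_
      rw [← Module.End.mul_apply, ← pow_succ']
    have e2 : ∀ j : ℕ, (ζF ^ i) • (cF ^ (i * (j + 1)) • (T ^ (j + 1)) w)
        = cF ^ (i * j) • (T ^ (j + 1)) w := by
      intro j
      rw [smul_smul]
      congr 1
      have e3 : ζF ^ i * cF ^ (i * (j + 1)) = cF ^ (i * j) * (ζF * cF) ^ i := by ring
      rw [e3, hζc, one_pow, mul_one]
    have had : cF ^ (i * d) • (T ^ d) w = cF ^ (i * 0) • (T ^ 0) w := by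
      rw [hTd, mul_comm i d, pow_mul, hcFd, one_pow]
      simp
    calc T (vv i) = ∑ j ∈ range d, (ζF ^ i) • (cF ^ (i * (j + 1)) • (T ^ (j + 1)) w) := by
          rw [e1]; exact (Finset.sum_congr rfl fun j _ => (e2 j).symm)
      _ = (ζF ^ i) • ∑ j ∈ range d, cF ^ (i * (j + 1)) • (T ^ (j + 1)) w := by
          rw [Finset.smul_sum]
      _ = (ζF ^ i) • vv i := by
          congr 1
          have h1 := Finset.sum_range_succ' (fun j => cF ^ (i * j) • (T ^ j) w) d
          have h2 := Finset.sum_range_succ (fun j => cF ^ (i * j) • (T ^ j) w) d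
          beta_reduce at h1 h2
          have h3 : (∑ j ∈ range d, cF ^ (i * (j + 1)) • (T ^ (j + 1)) w)
              + cF ^ (i * 0) • (T ^ 0) w
              = (∑ j ∈ range d, cF ^ (i * j) • (T ^ j) w) + cF ^ (i * d) • (T ^ d) w := by
            rw [← h1, ← h2]
          rw [had] at h3
          have h4 := add_right_cancel h3
          rw [h4, hvv]
  refine ⟨vv i, hvne, i, ?_⟩
  intro g
  obtain ⟨m, hm⟩ := hgen g
  have hkg : (g₀ ^ m)⁻¹ * g ∈ χ₀.ker := by
    rw [MonoidHom.mem_ker, map_mul, map_inv, map_pow, hm, inv_mul_cancel]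
  have hg : σ g (vv i) = (T ^ m) (vv i) := by
    have hgd : g = g₀ ^ m * ((g₀ ^ m)⁻¹ * g) := by group
    rw [hgd, map_mul, Module.End.mul_apply, vfix _ hkg, hT, ← map_pow]
  rw [hg, eig_pow key m]
  congr 1
  rw [← pow_mul, mul_comm i m, pow_mul]
  congr 1
  rw [hζF, ← Units.val_pow_eq_pow_val, hm]

end Eig

section Step
variable {ℓ : ℕ}
variable {F : Type} [Field F] [Fintype F] [CharP F ℓ]
variable {G : Type} [Group G] [Finite G]
variable {V : Type} [AddCommGroup V] [Module F V] [FiniteDimensional F V]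

lemma step_lemma (hℓ : ℓ.Prime) (ρ : G →* (V →ₗ[F] V)) (χ₀ : G →* Fˣ)
    (hK : IsPGroup ℓ χ₀.ker)
    (U : Submodule F V) (hUstab : ∀ g : G, ∀ v ∈ U, ρ g v ∈ U) (hUne : U ≠ ⊤) :
    ∃ U' : Submodule F V, U ≤ U' ∧ finrank F U' = finrank F U + 1 ∧
      (∀ g : G, ∀ v ∈ U', ρ g v ∈ U') ∧
      ∃ i : ℕ, ∀ g : G, ∀ v ∈ U', ρ g v - ((χ₀ g : F) ^ i) • v ∈ U := by
  have hle : ∀ g : G, U ≤ U.comap (ρ g) := fun g v hv => hUstab g v hv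
  -- induced representation on the quotient
  let σf : G → ((V ⧸ U) →ₗ[F] (V ⧸ U)) := fun g => U.mapQ U (ρ g) (hle g)
  have hσf : ∀ (g : G) (v : V), σf g (Submodule.Quotient.mk v)
      = Submodule.Quotient.mk (ρ g v) := fun g v => Submodule.mapQ_apply U U (ρ g) v
  have hmul : ∀ g h : G, σf (g * h) = σf g * σf h := by
    intro g h
    refine Submodule.linearMap_qext U (LinearMap.ext fun v => ?_)
    simp only [LinearMap.comp_apply, Submodule.mkQ_apply, Module.End.mul_apply, hσf, map_mul]
  let σ : G →* ((V ⧸ U) →ₗ[F] (V ⧸ U)) :=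
    { toFun := σf
      map_one' := by
        refine Submodule.linearMap_qext U (LinearMap.ext fun v => ?_)
        simp only [LinearMap.comp_apply, Submodule.mkQ_apply, hσf, map_one,
          Module.End.one_apply, LinearMap.id_apply]
      map_mul' := hmul }
  haveI : Nontrivial (V ⧸ U) := Submodule.Quotient.nontrivial_iff.2 hUne
  obtain ⟨v, hv0, i, heig⟩ := exists_common_eigenvector hℓ σ χ₀ hK
  set U' := Submodule.comap U.mkQ (F ∙ v) with hU'
  have hUle : U ≤ U' := by
    intro u hu
    rw [hU', Submodule.mem_comap, Submodule.mkQ_apply, (Submodule.Quotient.mk_eq_zero U).2 hu]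
    exact Submodule.zero_mem _
  refine ⟨U', hUle, ?_, ?_, i, ?_⟩
  · have hrank := LinearMap.finrank_range_add_finrank_ker (U.mkQ.comp U'.subtype)
    have hr1 : LinearMap.range (U.mkQ.comp U'.subtype) = (F ∙ v) := by
      rw [LinearMap.range_comp, Submodule.range_subtype, hU',
        Submodule.map_comap_eq, Submodule.range_mkQ, top_inf_eq]
    have hr2 : LinearMap.ker (U.mkQ.comp U'.subtype) = Submodule.comap U'.subtype U := by
      rw [LinearMap.ker_comp, Submodule.ker_mkQ]
    rw [hr1, hr2, finrank_span_singleton hv0,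
      (Submodule.comapSubtypeEquivOfLe hUle).finrank_eq] at hrank
    omega
  · intro g u hu
    rw [hU', Submodule.mem_comap, Submodule.mkQ_apply] at hu ⊢
    obtain ⟨c, hc⟩ := Submodule.mem_span_singleton.mp hu
    have hmk : (Submodule.Quotient.mk (ρ g u) : V ⧸ U) = σ g (Submodule.Quotient.mk u) :=
      (hσf g u).symm
    rw [hmk, ← hc, map_smul, heig g]
    exact Submodule.smul_mem _ _ (Submodule.smul_mem _ _ (Submodule.mem_span_singleton_self v))
  · intro g u hu
    rw [hU', Submodule.mem_comap, Submodule.mkQ_apply] at hu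
    obtain ⟨c, hc⟩ := Submodule.mem_span_singleton.mp hu
    rw [← Submodule.Quotient.mk_eq_zero U, Submodule.Quotient.mk_sub,
      Submodule.Quotient.mk_smul]
    have hmk : (Submodule.Quotient.mk (ρ g u) : V ⧸ U) = σ g (Submodule.Quotient.mk u) :=
      (hσf g u).symm
    rw [hmk, ← hc, map_smul, heig g, smul_comm, sub_self]

end Step

lemma unipotent_pow_eq_one {ℓ : ℕ} (hℓ : ℓ.Prime) {F : Type} [Field F] [CharP F ℓ]
    {V : Type} [AddCommGroup V] [Module F V]
    (A : V →ₗ[F] V) {r : ℕ} (hA : (A - 1) ^ r = 0) : A ^ (ℓ ^ r) = 1 := by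
  haveI : Fact ℓ.Prime := ⟨hℓ⟩
  have hle : r ≤ ℓ ^ r := (Nat.lt_pow_self hℓ.one_lt (n := r)).le
  have hpoly : ((Polynomial.X - 1 : Polynomial F)) ^ (ℓ ^ r)
      = Polynomial.X ^ (ℓ ^ r) - 1 := by
    rw [sub_pow_char_pow, one_pow]
  have happ := congrArg (Polynomial.aeval A) hpoly
  rw [map_pow, map_sub, map_sub, map_pow, Polynomial.aeval_X, map_one] at happ
  have h0 : (A - 1) ^ (ℓ ^ r) = 0 := by
    rw [← Nat.sub_add_cancel hle, pow_add, hA, mul_zero]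
  rw [h0] at happ
  exact (sub_eq_zero.mp happ.symm)

noncomputable def flagAux {ℓ : ℕ} (hℓ : ℓ.Prime) {F : Type} [Field F] [Fintype F] [CharP F ℓ]
    {G : Type} [Group G] [Finite G]
    {V : Type} [AddCommGroup V] [Module F V] [FiniteDimensional F V]
    (ρ : G →* (V →ₗ[F] V)) (χ₀ : G →* Fˣ) (hK : IsPGroup ℓ χ₀.ker) : ℕ → Submodule F V :=
  fun n => Nat.rec ⊥ (fun _ Uprev =>
    @dite (Submodule F V) ((∀ g : G, ∀ v ∈ Uprev, ρ g v ∈ Uprev) ∧ Uprev ≠ ⊤)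
      (Classical.propDecidable _)
      (fun h => (step_lemma hℓ ρ χ₀ hK Uprev h.1 h.2).choose) (fun _ => ⊤)) n

/-- Let `ℓ` be a prime, `F` a finite field of characteristic `ℓ`, `V`
an `r`-dimensional `F`-vector space, `G` a finite group with a faithful linear action
`ρ` on `V`, and `χ₀ : G → F^×` a character. Then `ker χ₀` is an `ℓ`-group if and only if
there is a chain of `G`-stable subspaces `0 = V_0 ⊆ ⋯ ⊆ V_r = V` with `dim V_s = s` and
integers `i_s ≥ 0` such that `G` acts on each quotient `V_s/V_{s−1}` through
`χ₀^{i_s}`. -/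
theorem ker_isPGroup_iff_upper_triangular_by_powers_of_character
    (ℓ : ℕ) (hℓ : ℓ.Prime)
    (F : Type) [Field F] [Fintype F] [CharP F ℓ]
    (G : Type) [Group G] [Finite G]
    (V : Type) [AddCommGroup V] [Module F V] [FiniteDimensional F V]
    (r : ℕ) (hr : Module.finrank F V = r)
    (ρ : G →* (V →ₗ[F] V)) (hρ : Function.Injective ρ)
    (χ₀ : G →* Fˣ) :
    IsPGroup ℓ χ₀.ker ↔
      ∃ (W : ℕ → Submodule F V) (i : ℕ → ℕ),
        W 0 = ⊥ ∧ W r = ⊤ ∧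
        (∀ s : ℕ, s < r → W s ≤ W (s + 1)) ∧
        (∀ s : ℕ, s ≤ r → Module.finrank F (W s) = s) ∧
        (∀ s : ℕ, s ≤ r → ∀ g : G, ∀ v ∈ W s, ρ g v ∈ W s) ∧
        (∀ s : ℕ, 1 ≤ s → s ≤ r → ∀ g : G, ∀ v ∈ W s,
          ρ g v - ((χ₀ g : F) ^ i s) • v ∈ W (s - 1)) := by
  classical
  haveI : Fact ℓ.Prime := ⟨hℓ⟩
  constructor
  · -- forward direction : build the flag
    intro hK
    set Wf : ℕ → Submodule F V := flagAux hℓ ρ χ₀ hK with hWf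
    have hW0 : Wf 0 = ⊥ := rfl
    have hWsucc : ∀ n, Wf (n + 1)
        = @dite (Submodule F V) ((∀ g : G, ∀ v ∈ Wf n, ρ g v ∈ Wf n) ∧ Wf n ≠ ⊤) (Classical.propDecidable _)
          (fun h => (step_lemma hℓ ρ χ₀ hK (Wf n) h.1 h.2).choose) (fun _ => ⊤) := fun n => rfl
    have main : ∀ s : ℕ, s ≤ r →
        (Module.finrank F (Wf s) = s ∧ (∀ g : G, ∀ v ∈ Wf s, ρ g v ∈ Wf s))
        ∧ (1 ≤ s → Wf (s - 1) ≤ Wf s ∧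
            ∃ i : ℕ, ∀ g : G, ∀ v ∈ Wf s, ρ g v - ((χ₀ g : F) ^ i) • v ∈ Wf (s - 1)) := by
      intro s
      induction s with
      | zero =>
        intro _
        refine ⟨⟨by simp [hW0], ?_⟩, by omega⟩
        intro g v hv
        simp only [hW0, Submodule.mem_bot] at hv ⊢
        rw [hv, map_zero]
      | succ n ih =>
        intro hn
        obtain ⟨⟨hrank, hstab⟩, -⟩ := ih (by omega)
        have hne : Wf n ≠ ⊤ := by
          intro h
          rw [h, finrank_top, hr] at hrank
          omega
        have hcond : (∀ g : G, ∀ v ∈ Wf n, ρ g v ∈ Wf n) ∧ Wf n ≠ ⊤ := ⟨hstab, hne⟩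
        have heq : Wf (n + 1) = (step_lemma hℓ ρ χ₀ hK (Wf n) hcond.1 hcond.2).choose := by
          rw [hWsucc n, dif_pos hcond]
        obtain ⟨hle, hrk, hst, hi⟩ := (step_lemma hℓ ρ χ₀ hK (Wf n) hcond.1 hcond.2).choose_spec
        rw [← heq] at hle hrk hst hi
        refine ⟨⟨by rw [hrk, hrank], hst⟩, fun _ => ?_⟩
        simpa using ⟨hle, hi⟩
    have hWr : Wf r = ⊤ := by
      apply Submodule.eq_top_of_finrank_eq
      rw [(main r le_rfl).1.1, hr]
    have hisel : ∀ s : ℕ, ∃ is : ℕ, 1 ≤ s → s ≤ r →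
        ∀ g : G, ∀ v ∈ Wf s, ρ g v - ((χ₀ g : F) ^ is) • v ∈ Wf (s - 1) := by
      intro s
      by_cases h : 1 ≤ s ∧ s ≤ r
      · obtain ⟨-, is, his⟩ := (main s h.2).2 h.1
        exact ⟨is, fun _ _ => his⟩
      · exact ⟨0, fun h1 h2 => absurd ⟨h1, h2⟩ h⟩
    choose iW hiW using hisel
    refine ⟨Wf, iW, hW0, hWr, ?_, fun s hs => ((main s hs).1).1,
      fun s hs => ((main s hs).1).2, fun s h1 h2 g v hv => hiW s h1 h2 g v hv⟩
    intro s hs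
    have := ((main (s + 1) (by omega)).2 (by omega)).1
    simpa using this
  · -- backward direction : the kernel is unipotent, hence an ℓ-group
    rintro ⟨W, i, hW0, hWr, hmono, hrank, hstab, hlast⟩
    intro k
    refine ⟨r, ?_⟩
    have hk : (k : G) ∈ χ₀.ker := k.2
    have hχk : ((χ₀ (k : G) : Fˣ) : F) = 1 := by
      rw [MonoidHom.mem_ker.mp hk, Units.val_one]
    set A := ρ (k : G) with hA
    have hN : ∀ s : ℕ, s ≤ r → ∀ v : V, ((A - 1) ^ s) v ∈ W (r - s) := by
      intro s
      induction s with
      | zero =>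
        intro _ v
        rw [pow_zero]
        simp [hWr]
      | succ n ih =>
        intro hn v
        rw [pow_succ', Module.End.mul_apply]
        have hmem := ih (by omega) v
        have h1 : 1 ≤ r - n := by omega
        have h2 : r - n ≤ r := by omega
        have := hlast (r - n) h1 h2 (k : G) (((A - 1) ^ n) v) hmem
        rw [hχk, one_pow, one_smul] at this
        have hsub : r - n - 1 = r - (n + 1) := by omega
        rw [hsub] at this
        simpa [LinearMap.sub_apply, hA] using this
    have hNr : (A - 1) ^ r = 0 := by
      apply LinearMap.ext
      intro v
      have := hN r le_rfl v
      rwa [Nat.sub_self, hW0, Submodule.mem_bot] at this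
    have hApow : A ^ (ℓ ^ r) = 1 := unipotent_pow_eq_one hℓ A hNr
    have hρk : ρ ((k : G) ^ (ℓ ^ r)) = ρ 1 := by
      rw [map_pow, map_one]
      exact hApow
    have hk1 : (k : G) ^ (ℓ ^ r) = 1 := hρ hρk
    exact Subtype.ext (by simpa using hk1)
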